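/- Let θ(τ) := ∑_{n ∈ ℤ} exp(2πi·n²·τ) for τ in the upper half-plane ℍ. For every matrix ((a,b),(c,d)) ∈ SL₂(ℤ) with 4 | c and d > 0, and every τ ∈ ℍ, θ((aτ+b)/(cτ+d)) = ε·√(cτ+d)·θ(τ), where ε = (c/d) if d ≡ 1 (mod 4) and ε = −i·(c/d) if d ≡ 3 (mod 4). Here (c/d) is the Jacobi symbol and √ is the principal branch of the square root. -/

import Mathlib

open Matrix MatrixGroups

/-- `θ(z) = ∑_{n ∈ ℤ} exp (2 π i n² z)`. -/
noncomputable def stdTheta (z : ℂ) : ℂ :=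
  ∑' n : ℤ, Complex.exp (2 * Real.pi * Complex.I * (n : ℂ) ^ 2 * z)

namespace StdThetaAux

open Complex ZMod jacobiSym
open scoped NumberTheorySymbols

lemma sqrtAux {x y : ℂ} (hx : x ≠ 0) (hy : y ≠ 0)
    (h : arg x + arg y ∈ Set.Ioc (-Real.pi) Real.pi) :
    (x*y) ^ ((1:ℂ)/2) = x ^ ((1:ℂ)/2) * y ^ ((1:ℂ)/2) := by
  rw [cpow_def_of_ne_zero (mul_ne_zero hx hy), cpow_def_of_ne_zero hx,
    cpow_def_of_ne_zero hy, Complex.log_mul hx hy h, ← Complex.exp_add]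
  ring_nf

lemma argPos {z : ℂ} (h : 0 < z.im) : 0 < arg z :=
  lt_of_le_of_ne (arg_nonneg_iff.2 h.le) (fun e => by
    have := arg_eq_zero_iff.1 e.symm; simp [this.2] at h)

lemma argNeg {z : ℂ} (h : z.im < 0) : arg z < 0 := arg_neg_iff.2 h

lemma sqrtMul {x y : ℂ} (hx : x ≠ 0) (hy : y ≠ 0)
    (h : (0 < x.im ∧ y.im < 0) ∨ (x.im < 0 ∧ 0 < y.im) ∨ (x.im = 0 ∧ 0 < x.re) ∨
      (y.im = 0 ∧ 0 < y.re) ∨ (0 < x.im ∧ 0 < y.im ∧ 0 < (x*y).im) ∨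
      (x.im < 0 ∧ y.im < 0 ∧ (x*y).im < 0)) :
    (x*y) ^ ((1:ℂ)/2) = x ^ ((1:ℂ)/2) * y ^ ((1:ℂ)/2) := by
  have hpi := Real.pi_pos
  have h1 := neg_pi_lt_arg x; have h2 := arg_le_pi x
  have h3 := neg_pi_lt_arg y; have h4 := arg_le_pi y
  apply sqrtAux hx hy
  have key : arg (x*y) - (arg x + arg y) ∈ Set.Ioo (-(2*Real.pi)) (2*Real.pi) →
      arg (x*y) = arg x + arg y := by
    intro hmem
    have : (Complex.arg (x*y) : Real.Angle) = ((arg x + arg y : ℝ) : Real.Angle) := by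
      rw [arg_mul_coe_angle hx hy, Real.Angle.coe_add]
    rw [Real.Angle.angle_eq_iff_two_pi_dvd_sub] at this
    obtain ⟨k, hk⟩ := this
    have h5 : (-1:ℤ) < k := by
      have : (-1:ℝ) < k := by nlinarith [hmem.1, hk ▸ hmem.1]
      exact_mod_cast this
    have h6 : (k:ℤ) < 1 := by
      have : (k:ℝ) < 1 := by nlinarith [hmem.2, hk ▸ hmem.2]
      exact_mod_cast this
    have hk0 : k = 0 := by omega
    have : arg (x*y) - (arg x + arg y) = 0 := by rw [hk, hk0]; push_cast; ring
    linarith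
  have h5 := neg_pi_lt_arg (x*y); have h6 := arg_le_pi (x*y)
  rcases h with ⟨a1, a2⟩ | ⟨a1, a2⟩ | ⟨a1, a2⟩ | ⟨a1, a2⟩ | ⟨a1, a2, a3⟩ | ⟨a1, a2, a3⟩
  · have := argPos a1; have := argNeg a2; constructor <;> linarith
  · have := argPos a2; have := argNeg a1; constructor <;> linarith
  · have hax : arg x = 0 := arg_eq_zero_iff.2 ⟨a2.le, a1⟩
    rw [hax]; constructor <;> linarith
  · have hay : arg y = 0 := arg_eq_zero_iff.2 ⟨a2.le, a1⟩
    rw [hay]; constructor <;> linarith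
  · have hx1 := argPos a1; have hy1 := argPos a2; have hw1 := argPos a3
    constructor
    · linarith
    · by_contra hgt
      push_neg at hgt
      have := key ⟨by linarith, by linarith⟩
      linarith
  · have hx1 := argNeg a1; have hy1 := argNeg a2; have hw1 := argNeg a3
    constructor
    · by_contra hle
      push_neg at hle
      have := key ⟨by linarith, by linarith⟩
      linarith
    · linarith

lemma sqrtRePos {x y : ℂ} (hx : 0 < x.re) (hy : 0 < y.re) :
    (x*y) ^ ((1:ℂ)/2) = x ^ ((1:ℂ)/2) * y ^ ((1:ℂ)/2) := by
  have hx0 : x ≠ 0 := fun h => by simp [h] at hx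
  have hy0 : y ≠ 0 := fun h => by simp [h] at hy
  have h1 : |arg x| < Real.pi/2 := abs_arg_lt_pi_div_two_iff.2 (Or.inl hx)
  have h2 : |arg y| < Real.pi/2 := abs_arg_lt_pi_div_two_iff.2 (Or.inl hy)
  rw [abs_lt] at h1 h2
  exact sqrtAux hx0 hy0 ⟨by linarith, by linarith⟩

lemma sqrtNegOne : ((-1:ℂ)) ^ ((1:ℂ)/2) = I := by
  rw [cpow_def_of_ne_zero (by norm_num), Complex.log_neg_one]
  rw [show (Real.pi : ℂ) * I * (1/2) = ((Real.pi/2 : ℝ) : ℂ) * I by push_cast; ring,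
    Complex.exp_mul_I, ← Complex.ofReal_cos, ← Complex.ofReal_sin,
    Real.cos_pi_div_two, Real.sin_pi_div_two]
  simp

lemma stdTheta_eq (z : ℂ) : stdTheta z = jacobiTheta (2 * z) := by
  unfold stdTheta jacobiTheta
  refine tsum_congr fun n => ?_
  ring_nf

lemma stdTheta_add_int (z : ℂ) (n : ℤ) : stdTheta (z + n) = stdTheta z := by
  refine tsum_congr fun k => ?_
  rw [mul_add, Complex.exp_add]
  have : (2 : ℂ) * Real.pi * I * (k:ℂ)^2 * n = (k^2 * n : ℤ) * (2 * Real.pi * I) := by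
    push_cast; ring
  rw [this, Complex.exp_int_mul_two_pi_mul_I, mul_one]

lemma stdTheta_F {z : ℂ} (hz : 0 < z.im) :
    stdTheta (-1/(4*z)) = (-2*I*z) ^ ((1:ℂ)/2) * stdTheta z := by
  have hz0 : z ≠ 0 := fun h => by simp [h] at hz
  have h2z : (0:ℝ) < (2*z).im := by simp [Complex.mul_im]; linarith
  have key := jacobiTheta_S_smul ⟨2*z, h2z⟩
  rw [UpperHalfPlane.modular_S_smul, UpperHalfPlane.coe_mk] at key
  have key' : jacobiTheta (-(2*z))⁻¹ = (-I * (2*z)) ^ ((1:ℂ)/2) * jacobiTheta (2*z) := key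
  rw [stdTheta_eq, stdTheta_eq]
  rw [show 2 * (-1/(4*z)) = (-(2*z))⁻¹ by field_simp; ring]
  rw [key']
  ring_nf

lemma sqrtNegIm {z : ℂ} (h : z.im < 0) : (-z)^((1:ℂ)/2) = Complex.I * z^((1:ℂ)/2) := by
  have hz0 : z ≠ 0 := fun h0 => by simp [h0] at h
  have harg := argNeg h
  have h1 := neg_pi_lt_arg z
  have hmem : arg z + arg (-1 : ℂ) ∈ Set.Ioc (-Real.pi) Real.pi := by
    rw [arg_neg_one]
    constructor
    · have := Real.pi_pos; linarith
    · linarith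
  have e : -z = z * (-1) := by ring
  rw [e, sqrtAux hz0 (by norm_num) hmem, sqrtNegOne]
  ring

lemma sqrtNegPos {z : ℂ} (h : 0 < z.im) : (-z)^((1:ℂ)/2) = -Complex.I * z^((1:ℂ)/2) := by
  have h2 : (-z).im < 0 := by rw [Complex.neg_im]; linarith
  have hthis := sqrtNegIm h2
  rw [neg_neg] at hthis
  linear_combination Complex.I * hthis + ((-z)^((1:ℂ)/2)) * Complex.I_mul_I

lemma re_neg_two_I_mul (σ : ℂ) : (-2*I*σ).re = 2*σ.im := by
  simp [Complex.mul_re]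

lemma stdTheta_V {z : ℂ} (hz : 0 < z.im) (m : ℤ) :
    stdTheta (z/(4*m*z+1)) = (4*m*z+1) ^ ((1:ℂ)/2) * stdTheta z := by
  rcases eq_or_ne m 0 with rfl | hm
  · simp
  have hz0 : z ≠ 0 := fun h => by simp [h] at hz
  set w : ℂ := -1/(4*z) with hw_def
  have hw : 0 < w.im := by
    have hww : w = -(4*z)⁻¹ := by rw [hw_def]; ring
    have h1 : 0 < normSq (4*z) := normSq_pos.2 (by simpa using hz0)
    rw [hww, neg_im, Complex.inv_im, show (4*z).im = 4*z.im by simp,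
      neg_div, neg_neg]
    positivity
  set σ : ℂ := w - m with hσ_def
  have hσ : 0 < σ.im := by rw [hσ_def]; simpa using hw
  have hσ0 : σ ≠ 0 := fun h => by simp [h] at hσ
  have h4σ : (4:ℂ)*σ ≠ 0 := by
    intro h; apply hσ0
    have := mul_eq_zero.1 h
    simpa using this
  have hden : (4*(m:ℂ)*z+1) ≠ 0 := by
    intro h
    have h2 : ((4*(m:ℂ)*z+1)).im = 0 := by rw [h]; simp
    simp [Complex.add_im, Complex.mul_im] at h2
    rcases h2 with h' | h'
    · exact hm (by exact_mod_cast h')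
    · linarith
  have e1 : z/(4*m*z+1) = -1/(4*σ) := by
    rw [div_eq_div_iff hden h4σ, hσ_def, hw_def]
    field_simp
    ring
  have e2 : stdTheta σ = stdTheta w := by
    have : σ = w + ((-m : ℤ) : ℂ) := by rw [hσ_def]; push_cast; ring
    rw [this, stdTheta_add_int]
  have hx : 0 < (-2*I*σ).re := by rw [re_neg_two_I_mul]; linarith
  have hy : 0 < (-2*I*z).re := by rw [re_neg_two_I_mul]; linarith
  rw [e1, stdTheta_F hσ, e2, stdTheta_F hz, ← mul_assoc, ← sqrtRePos hx hy]
  congr 2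
  rw [hσ_def, hw_def]
  field_simp
  linear_combination (-4 - 16*z*(m:ℂ)) * Complex.I_mul_I

lemma chi4_flip {d D : ℕ} (hd : d % 2 = 1) (h : 4 ∣ D + d) : χ₄ D = - χ₄ d := by
  rw [χ₄_nat_eq_if_mod_four, χ₄_nat_eq_if_mod_four]
  have h1 : d % 4 = 1 ∨ d % 4 = 3 := by omega
  rcases h1 with h1 | h1
  · have h2 : D % 4 = 3 := by omega
    have h3 : D % 2 = 1 := by omega
    simp [h1, h2, h3, hd]
  · have h2 : D % 4 = 1 := by omega
    have h3 : D % 2 = 1 := by omega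
    simp [h1, h2, h3, hd]

lemma chi8_same {d D : ℕ} (hd : d % 2 = 1) (h : 8 ∣ D + d) : χ₈ D = χ₈ d := by
  rw [χ₈_nat_eq_if_mod_eight, χ₈_nat_eq_if_mod_eight]
  have h2 : D % 2 = 1 := by omega
  have h1 : d % 8 = 1 ∨ d % 8 = 3 ∨ d % 8 = 5 ∨ d % 8 = 7 := by omega
  rcases h1 with h1 | h1 | h1 | h1
  · have h3 : D % 8 = 7 := by omega
    simp [h1, h2, h3, hd]
  · have h3 : D % 8 = 5 := by omega
    simp [h1, h2, h3, hd]
  · have h3 : D % 8 = 3 := by omega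
    simp [h1, h2, h3, hd]
  · have h3 : D % 8 = 1 := by omega
    simp [h1, h2, h3, hd]

lemma neg_one_pow_par {a b : ℕ} (h : a % 2 = b % 2) : ((-1:ℤ))^a = (-1)^b := by
  conv_lhs => rw [← Nat.div_add_mod a 2]
  conv_rhs => rw [← Nat.div_add_mod b 2]
  rw [pow_add, pow_add, pow_mul, pow_mul, neg_one_sq, one_pow, one_pow, h]

lemma recflip {u d D : ℕ} (hu : Odd u) (hd : Odd d) (hD : Odd D)
    (hdvd : (u:ℤ) ∣ (D:ℤ) + d) (h4 : 4 ∣ D + d) :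
    J((u:ℕ) | D) = J((u:ℕ) | d) := by
  rw [jacobiSym.quadratic_reciprocity hu hD, jacobiSym.quadratic_reciprocity hu hd]
  have key : J((D:ℕ) | u) = χ₄ u * J((d:ℕ) | u) := by
    have e : ((D:ℤ)) % (u:ℕ) = (-(d:ℤ)) % (u:ℕ) := Int.ModEq.symm
      (Int.modEq_iff_dvd.2 (by push_cast; convert hdvd using 1; ring))
    rw [jacobiSym.mod_left' e, jacobiSym.neg _ hu]
  rw [key]
  have hχ : χ₄ u = (-1:ℤ) ^ (u / 2) := χ₄_eq_neg_one_pow (Nat.odd_iff.1 hu)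
  rw [hχ]
  have hd2 := Nat.odd_iff.1 hd
  have hD2 := Nat.odd_iff.1 hD
  have main : (-1:ℤ)^(u/2*(D/2)) * (-1)^(u/2) = (-1)^(u/2*(d/2)) := by
    rw [← pow_add]
    apply neg_one_pow_par
    have e1 := Nat.mul_mod (u/2) (D/2) 2
    have e2 := Nat.mul_mod (u/2) (d/2) 2
    have hp : u/2 % 2 = 0 ∨ u/2 % 2 = 1 := by omega
    have hq : D/2 % 2 = 0 ∨ D/2 % 2 = 1 := by omega
    have hr : d/2 % 2 = 0 ∨ d/2 % 2 = 1 := by omega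
    rcases hp with hp|hp <;> rcases hq with hq|hq <;> rcases hr with hr|hr <;>
      rw [hp, hq] at e1 <;> rw [hp, hr] at e2 <;> omega
  calc (-1:ℤ)^(u/2*(D/2)) * ((-1:ℤ)^(u/2) * J((d:ℕ) | u))
      = ((-1:ℤ)^(u/2*(D/2)) * (-1)^(u/2)) * J((d:ℕ) | u) := by ring
    _ = (-1:ℤ)^(u/2*(d/2)) * J((d:ℕ) | u) := by rw [main]

lemma jacobi_plus (c : ℤ) (hc : 4 ∣ c) (d d' : ℕ) (hd : d % 2 = 1) (hd' : d' % 2 = 1)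
    (hdvd : c ∣ (d:ℤ) - d') : J(c | d) = J(c | d') := by
  obtain ⟨c₁, rfl⟩ := hc
  rcases eq_or_ne c₁ 0 with rfl | hc1
  · have h0 : (d:ℤ) - d' = 0 := by simpa using hdvd
    have : d = d' := by omega
    rw [this]
  · rw [← jacobiSym.div_four_left (a := 4*c₁) (by omega) hd,
      ← jacobiSym.div_four_left (a := 4*c₁) (by omega) hd',
      Int.mul_ediv_cancel_left _ (by norm_num)]
    rw [jacobiSym.mod_right c₁ (Nat.odd_iff.2 hd), jacobiSym.mod_right c₁ (Nat.odd_iff.2 hd')]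
    congr 1
    have hk : ((4 * c₁.natAbs : ℕ) : ℤ) ∣ (d:ℤ) - d' := by
      rw [show ((4 * c₁.natAbs : ℕ) : ℤ) = (4*c₁).natAbs by push_cast [Int.natAbs_mul]; norm_num]
      exact (Int.natAbs_dvd).2 hdvd
    have : (d:ℤ) % (4 * c₁.natAbs : ℕ) = (d':ℤ) % (4 * c₁.natAbs : ℕ) :=
      Int.ModEq.symm (Int.modEq_iff_dvd.2 hk)
    exact_mod_cast this

lemma jacobi_odd_flip (c : ℤ) (hodd : Odd c) (d D : ℕ) (hd : d % 2 = 1) (hD : D % 2 = 1)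
    (hdvd : c ∣ (D:ℤ) + d) (h4 : 4 ∣ D + d) : J(c | D) = c.sign * J(c | d) := by
  have hc0 : c ≠ 0 := by rintro rfl; exact (by simpa using hodd : ¬ Odd (0:ℤ)) hodd
  have hu : Odd c.natAbs := by exact hodd.natAbs
  have hudvd : (c.natAbs:ℤ) ∣ (D:ℤ) + d := (Int.natAbs_dvd).2 hdvd
  have hrec := recflip hu (Nat.odd_iff.2 hd) (Nat.odd_iff.2 hD) hudvd h4
  rcases lt_or_gt_of_ne hc0 with hneg | hpos
  · have hu1 : ((c.natAbs:ℤ)).sign = 1 :=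
      Int.sign_eq_one_of_pos (by exact_mod_cast Int.natAbs_pos.2 hc0)
    have hcu : c = -(c.natAbs:ℤ) := by omega
    rw [hcu, jacobiSym.neg _ (Nat.odd_iff.2 hD), jacobiSym.neg _ (Nat.odd_iff.2 hd),
      Int.sign_neg, hu1, hrec, chi4_flip hd h4]
    ring
  · have hu1 : ((c.natAbs:ℤ)).sign = 1 :=
      Int.sign_eq_one_of_pos (by exact_mod_cast Int.natAbs_pos.2 hc0)
    have hcu : c = (c.natAbs:ℤ) := by omega
    rw [hcu, hrec, hu1, one_mul]

lemma jacobi_neg_flip : ∀ k : ℕ, ∀ c : ℤ, c.natAbs ≤ k → 4 ∣ c → c ≠ 0 →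
    ∀ d D : ℕ, d % 2 = 1 → D % 2 = 1 → (c ∣ (D:ℤ) + d) →
    J(c | D) = c.sign * J(c | d) := by
  intro k
  induction k with
  | zero => intro c hk _ hc0 _ _ _ _ _; exact absurd (Int.natAbs_eq_zero.1 (by omega)) hc0
  | succ k ih =>
    intro c hk hc4 hc0 d D hd hD hdvd
    obtain ⟨c₁, rfl⟩ := hc4
    have hc1 : c₁ ≠ 0 := by rintro rfl; simp at hc0
    have h4dd : 4 ∣ D + d := by
      have : (4:ℤ) ∣ (D:ℤ) + d := dvd_trans ⟨c₁, rfl⟩ hdvd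
      exact_mod_cast this
    have hsign : (4*c₁).sign = c₁.sign := by
      rw [Int.sign_mul, Int.sign_eq_one_of_pos (by norm_num : (0:ℤ) < 4), one_mul]
    rw [← jacobiSym.div_four_left (a := 4*c₁) (by omega) hD,
      ← jacobiSym.div_four_left (a := 4*c₁) (by omega) hd,
      Int.mul_ediv_cancel_left _ (by norm_num), hsign]
    have hc1dvd : c₁ ∣ (D:ℤ) + d := dvd_trans (dvd_mul_left c₁ 4) hdvd
    by_cases h4 : (4:ℤ) ∣ c₁
    · have hle : c₁.natAbs ≤ k := by
        have h1 : (4*c₁).natAbs = 4 * c₁.natAbs := by rw [Int.natAbs_mul]; rfl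
        have h2 : 1 ≤ c₁.natAbs := by omega
        omega
      exact ih c₁ hle h4 hc1 d D hd hD hc1dvd
    · by_cases h2 : (2:ℤ) ∣ c₁
      · obtain ⟨c₂, rfl⟩ := h2
        have hc2odd : Odd c₂ := by
          rcases Int.even_or_odd c₂ with he | ho
          · exact absurd (by obtain ⟨t, rfl⟩ := he; exact ⟨t, by ring⟩) h4
          · exact ho
        have h8 : 8 ∣ D + d := by
          have : (8:ℤ) ∣ (D:ℤ) + d := dvd_trans ⟨c₂, by ring⟩ hdvd
          exact_mod_cast this
        rw [jacobiSym.mul_left, jacobiSym.mul_left, jacobiSym.at_two (Nat.odd_iff.2 hD),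
          jacobiSym.at_two (Nat.odd_iff.2 hd), chi8_same hd h8,
          jacobi_odd_flip c₂ hc2odd d D hd hD (dvd_trans (dvd_mul_left c₂ 2) hc1dvd) h4dd,
          show (2*c₂).sign = c₂.sign by
            rw [Int.sign_mul, Int.sign_eq_one_of_pos (by norm_num : (0:ℤ) < 2), one_mul]]
        ring
      · have hodd : Odd c₁ := by
          rcases Int.even_or_odd c₁ with he | ho
          · exact absurd (by obtain ⟨t, rfl⟩ := he; exact ⟨t, by ring⟩ : (2:ℤ) ∣ c₁) h2
          · exact ho
        exact jacobi_odd_flip c₁ hodd d D hd hD hc1dvd h4dd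

noncomputable def epsFac (c d : ℤ) : ℂ :=
  (if d % 4 = 1 then 1 else -Complex.I) * ((J(c | d.natAbs) : ℤ) : ℂ)

lemma epsA {c d d' : ℤ} (hc4 : 4 ∣ c) (hd : 0 < d) (hd' : 0 < d') (hodd : d % 2 = 1)
    (hdvd : c ∣ d - d') : epsFac c d = epsFac c d' := by
  have h4 : (4:ℤ) ∣ d - d' := dvd_trans hc4 hdvd
  have hmod : d % 4 = d' % 4 := by omega
  have hodd' : d' % 2 = 1 := by omega
  have e1 : ((d.natAbs : ℕ) : ℤ) = d := by omega
  have e2 : ((d'.natAbs : ℕ) : ℤ) = d' := by omega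
  have hJ : J(c | d.natAbs) = J(c | d'.natAbs) := by
    apply jacobi_plus c hc4 _ _ (by omega) (by omega)
    rw [e1, e2]; exact hdvd
  rw [epsFac, epsFac, hJ, hmod]

lemma epsB {c c' d : ℤ} (hd : 0 < d) (hdvd : d ∣ c - c') : epsFac c d = epsFac c' d := by
  have hdvd' : ((d.natAbs:ℕ):ℤ) ∣ c' - c := by
    rw [show ((d.natAbs:ℕ):ℤ) = d by omega]; simpa [neg_sub] using dvd_neg.2 hdvd
  have hJ : J(c | d.natAbs) = J(c' | d.natAbs) :=
    jacobiSym.mod_left' (Int.modEq_iff_dvd.2 hdvd')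
  rw [epsFac, epsFac, hJ]

lemma epsC {c d D : ℤ} (hc4 : 4 ∣ c) (hc0 : c ≠ 0) (hd : 0 < d) (hD : 0 < D)
    (hdodd : d % 2 = 1) (hdvd : c ∣ D + d) :
    epsFac (-c) D * (if 0 < c then -Complex.I else Complex.I) = epsFac c d := by
  have h4 : (4:ℤ) ∣ D + d := dvd_trans hc4 hdvd
  have hDodd : D % 2 = 1 := by omega
  have hOdd : Odd D.natAbs := Nat.odd_iff.2 (by omega)
  have hflip : J(c | D.natAbs) = c.sign * J(c | d.natAbs) := by
    apply jacobi_neg_flip c.natAbs c le_rfl hc4 hc0 _ _ (by omega) (by omega)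
    rw [show ((D.natAbs:ℕ):ℤ) = D by omega, show ((d.natAbs:ℕ):ℤ) = d by omega]
    exact hdvd
  have hneg : J(-c | D.natAbs) = χ₄ D.natAbs * J(c | D.natAbs) := jacobiSym.neg c hOdd
  have hI : Complex.I * Complex.I = -1 := Complex.I_mul_I
  rcases (by omega : d % 4 = 1 ∨ d % 4 = 3) with hd4 | hd4
  · have hD4 : D % 4 = 3 := by omega
    have hχ : χ₄ D.natAbs = -1 := χ₄_nat_three_mod_four (by omega)
    rcases lt_or_gt_of_ne hc0 with hneg' | hpos
    · have hs : c.sign = -1 := Int.sign_eq_neg_one_of_neg hneg'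
      rw [epsFac, epsFac, if_neg (by omega), if_pos hd4, if_neg (by omega : ¬ 0 < c),
        hneg, hχ, hflip, hs]
      push_cast
      linear_combination (-(J(c | d.natAbs) : ℂ)) * hI
    · have hs : c.sign = 1 := Int.sign_eq_one_of_pos hpos
      rw [epsFac, epsFac, if_neg (by omega), if_pos hd4, if_pos hpos,
        hneg, hχ, hflip, hs]
      push_cast
      linear_combination (-(J(c | d.natAbs) : ℂ)) * hI
  · have hD4 : D % 4 = 1 := by omega
    have hχ : χ₄ D.natAbs = 1 := χ₄_nat_one_mod_four (by omega)
    rcases lt_or_gt_of_ne hc0 with hneg' | hpos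
    · have hs : c.sign = -1 := Int.sign_eq_neg_one_of_neg hneg'
      rw [epsFac, epsFac, if_pos hD4, if_neg (by omega : ¬ 0 < c), if_neg (by omega),
        hneg, hχ, hflip, hs]
      push_cast
      ring
    · have hs : c.sign = 1 := Int.sign_eq_one_of_pos hpos
      rw [epsFac, epsFac, if_pos hD4, if_pos hpos, if_neg (by omega),
        hneg, hχ, hflip, hs]
      push_cast
      ring

lemma imLin (C D : ℤ) (z : ℂ) : ((C:ℂ)*z + (D:ℂ)).im = (C:ℝ) * z.im := by
  simp [Complex.add_im, Complex.mul_im]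

lemma denom_ne {C D : ℤ} (hD : 0 < D) {z : ℂ} (hz : 0 < z.im) : (C:ℂ)*z + (D:ℂ) ≠ 0 := by
  intro h
  have h1 : ((C:ℂ)*z + (D:ℂ)).im = 0 := by rw [h]; simp
  rw [imLin] at h1
  have hC : (C:ℝ) = 0 := by
    rcases mul_eq_zero.1 h1 with h' | h'
    · exact h'
    · linarith
  have hC' : C = 0 := by exact_mod_cast hC
  have h2 : ((C:ℂ)*z + (D:ℂ)).re = 0 := by rw [h]; simp
  rw [hC'] at h2
  simp at h2
  omega

lemma chainV (A₂ B₂ C₂ D m : ℤ) (hD : 0 < D)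
    (hP : ∀ τ : ℂ, 0 < τ.im → stdTheta (((A₂:ℂ)*τ+B₂)/((C₂:ℂ)*τ+D)) =
      epsFac C₂ D * ((C₂:ℂ)*τ+D) ^ ((1:ℂ)/2) * stdTheta τ)
    (τ : ℂ) (hτ : 0 < τ.im) :
    stdTheta ((((A₂+4*m*B₂ : ℤ):ℂ)*τ+B₂)/(((C₂+4*m*D : ℤ):ℂ)*τ+D)) =
      epsFac (C₂+4*m*D) D * (((C₂+4*m*D : ℤ):ℂ)*τ+D) ^ ((1:ℂ)/2) * stdTheta τ := by
  set w : ℂ := 4*(m:ℂ)*τ+1 with hw_def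
  have hw0 : w ≠ 0 := by
    have : w = ((4*m : ℤ):ℂ)*τ + ((1:ℤ):ℂ) := by rw [hw_def]; push_cast; ring
    rw [this]; exact denom_ne one_pos hτ
  set τ₂ : ℂ := τ / w with hτ₂_def
  have hτ₂ : 0 < τ₂.im := by
    have hns : 0 < Complex.normSq w := Complex.normSq_pos.2 hw0
    have hre : w.re = 4*(m:ℝ)*τ.re + 1 := by
      rw [hw_def]; simp [Complex.add_re, Complex.mul_re]
    have him : w.im = 4*(m:ℝ)*τ.im := by
      rw [hw_def]; simp [Complex.add_im, Complex.mul_im]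
    have : τ₂.im = τ.im / Complex.normSq w := by
      rw [hτ₂_def, Complex.div_im, hre, him, div_sub_div_same]
      congr 1
      ring
    rw [this]; positivity
  have key := hP τ₂ hτ₂
  have hden2 : (C₂:ℂ)*τ₂+D ≠ 0 := denom_ne hD hτ₂
  have hdenC : ((C₂+4*m*D : ℤ):ℂ)*τ+D ≠ 0 := denom_ne hD hτ
  have hx : (C₂:ℂ)*τ₂+D = (((C₂+4*m*D : ℤ):ℂ)*τ+D)/w := by
    rw [hτ₂_def]
    field_simp
    rw [hw_def]
    push_cast
    ring
  have hxw : ((C₂:ℂ)*τ₂+D) * w = ((C₂+4*m*D : ℤ):ℂ)*τ+D := by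
    rw [hx, div_mul_cancel₀ _ hw0]
  have hpt : (((A₂+4*m*B₂ : ℤ):ℂ)*τ+B₂)/(((C₂+4*m*D : ℤ):ℂ)*τ+D) =
      ((A₂:ℂ)*τ₂+B₂)/((C₂:ℂ)*τ₂+D) := by
    have hy : (A₂:ℂ)*τ₂+B₂ = (((A₂+4*m*B₂ : ℤ):ℂ)*τ+B₂)/w := by
      rw [hτ₂_def]; field_simp; rw [hw_def]; push_cast; ring
    rw [hy, hx, div_div_div_comm, div_self hw0, div_one]
  have hτ₂eq : τ₂ = τ/(4*(m:ℤ)*τ+1) := by rw [hτ₂_def, hw_def]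
  have hV : stdTheta τ₂ = w ^ ((1:ℂ)/2) * stdTheta τ := by
    rw [hτ₂eq]
    have := stdTheta_V hτ m
    rw [this, hw_def]
  have hsqrt : (((C₂+4*m*D : ℤ):ℂ)*τ+D) ^ ((1:ℂ)/2) =
      ((C₂:ℂ)*τ₂+D) ^ ((1:ℂ)/2) * w ^ ((1:ℂ)/2) := by
    rw [← hxw]
    apply sqrtMul hden2 hw0
    have hximC : ((C₂:ℂ)*τ₂+D).im = (C₂:ℝ) * τ₂.im := by
      have : (D:ℂ) = ((D:ℤ):ℂ) := by norm_num
      rw [this, imLin]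
    have hyim : w.im = 4*(m:ℝ)*τ.im := by
      rw [hw_def]; simp [Complex.add_im, Complex.mul_im]
    have hzim : (((C₂:ℂ)*τ₂+D) * w).im = ((C₂+4*m*D : ℤ):ℝ) * τ.im := by
      rw [hxw]
      have : (D:ℂ) = ((D:ℤ):ℂ) := by norm_num
      rw [this, imLin]
    rcases lt_trichotomy C₂ 0 with hC2 | hC2 | hC2
    · rcases lt_trichotomy m 0 with hm | hm | hm
      · -- both neg: triple negative
        right; right; right; right; right
        refine ⟨?_, ?_, ?_⟩
        · rw [hximC]
          have : (C₂:ℝ) < 0 := by exact_mod_cast hC2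
          exact mul_neg_of_neg_of_pos this hτ₂
        · rw [hyim]
          have : (4*(m:ℝ)) < 0 := by
            have : (m:ℝ) < 0 := by exact_mod_cast hm
            linarith
          nlinarith
        · rw [hzim]
          have : ((C₂+4*m*D : ℤ):ℝ) < 0 := by
            have : C₂+4*m*D < 0 := by nlinarith
            exact_mod_cast this
          exact mul_neg_of_neg_of_pos this hτ
      · -- m = 0
        right; right; right; left
        subst hm
        constructor
        · rw [hyim]; norm_num
        · rw [hw_def]; norm_num
      · -- C₂ < 0 < m : mixed
        right; left
        refine ⟨?_, ?_⟩
        · rw [hximC]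
          have : (C₂:ℝ) < 0 := by exact_mod_cast hC2
          exact mul_neg_of_neg_of_pos this hτ₂
        · rw [hyim]
          have : (0:ℝ) < (m:ℝ) := by exact_mod_cast hm
          positivity
    · -- C₂ = 0 : x = D real pos
      right; right; left
      subst hC2
      constructor
      · rw [hximC]; norm_num
      · have : ((0:ℤ):ℂ)*τ₂+(D:ℂ) = (D:ℂ) := by norm_num
        rw [this]
        simp
        exact_mod_cast hD
    · rcases lt_trichotomy m 0 with hm | hm | hm
      · -- x pos, y neg
        left
        refine ⟨?_, ?_⟩
        · rw [hximC]
          have : (0:ℝ) < (C₂:ℝ) := by exact_mod_cast hC2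
          positivity
        · rw [hyim]
          have : (m:ℝ) < 0 := by exact_mod_cast hm
          nlinarith
      · right; right; right; left
        subst hm
        constructor
        · rw [hyim]; norm_num
        · rw [hw_def]; norm_num
      · right; right; right; right; left
        refine ⟨?_, ?_, ?_⟩
        · rw [hximC]
          have : (0:ℝ) < (C₂:ℝ) := by exact_mod_cast hC2
          positivity
        · rw [hyim]
          have : (0:ℝ) < (m:ℝ) := by exact_mod_cast hm
          positivity
        · rw [hzim]
          have : (0:ℝ) < ((C₂+4*m*D : ℤ):ℝ) := by
            have : 0 < C₂+4*m*D := by nlinarith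
            exact_mod_cast this
          positivity
  have heps : epsFac C₂ D = epsFac (C₂+4*m*D) D := epsB hD ⟨-4*m, by ring⟩
  rw [hpt, key, hV, hsqrt, heps]
  ring

lemma theta_base (a b d : ℤ) (hdet : a*d - b*0 = 1) (hd : 0 < d) (τ : ℂ) :
    stdTheta (((a:ℂ)*τ+(b:ℂ))/(((0:ℤ):ℂ)*τ+(d:ℂ))) =
      epsFac 0 d * (((0:ℤ):ℂ)*τ+(d:ℂ)) ^ ((1:ℂ)/2) * stdTheta τ := by
  have hd1 : d = 1 := by
    have hd' : d ∣ 1 := Dvd.intro_left a (by linarith)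
    have := Int.le_of_dvd one_pos hd'
    omega
  subst hd1
  have ha1 : a = 1 := by omega
  subst ha1
  have e : ((0:ℤ):ℂ)*τ+((1:ℤ):ℂ) = 1 := by push_cast; ring
  have eps1 : epsFac 0 1 = 1 := by
    simp [epsFac, jacobiSym.one_right]
  rw [e, eps1, Complex.one_cpow]
  have e2 : ((1:ℤ):ℂ)*τ+((b:ℤ):ℂ) = τ + (b:ℂ) := by push_cast; ring
  rw [e2, div_one, mul_one, one_mul, stdTheta_add_int]

lemma reduce_step (C D : ℤ) (hD : 0 < D) :
    ∃ C₂ m : ℤ, C - C₂ = 4*D*m ∧ -(2*D) ≤ C₂ ∧ C₂ ≤ 2*D := by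
  have h4D : (0:ℤ) < 4*D := by omega
  have hsplit := Int.emod_add_mul_ediv C (4*D)
  have hr0 : 0 ≤ C % (4*D) := Int.emod_nonneg C (by omega)
  have hrlt : C % (4*D) < 4*D := Int.emod_lt_of_pos C h4D
  set r := C % (4*D) with hr_def
  set q := C / (4*D) with hq_def
  clear_value r q
  rcases le_or_gt (2*r) (4*D) with hcase | hcase
  · exact ⟨r, q, by linarith, by linarith, by linarith⟩
  · refine ⟨r - 4*D, q+1, ?_, by linarith, by linarith⟩
    have : 4*D*(q+1) = 4*D*q + 4*D := by ring
    linarith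

lemma thetaMain : ∀ k : ℕ, ∀ c : ℤ, c.natAbs ≤ k → ∀ a b d : ℤ, a*d - b*c = 1 → 4 ∣ c →
    0 < d → ∀ τ : ℂ, 0 < τ.im →
    stdTheta (((a:ℂ)*τ+(b:ℂ))/((c:ℂ)*τ+(d:ℂ))) =
      epsFac c d * ((c:ℂ)*τ+(d:ℂ)) ^ ((1:ℂ)/2) * stdTheta τ := by
  intro k
  induction k with
  | zero =>
    intro c hk a b d hdet hc4 hd τ hτ
    have hc0 : c = 0 := by omega
    subst hc0
    exact theta_base a b d hdet hd τ
  | succ k ih =>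
    intro c hk a b d hdet hc4 hd0 τ hτ
    rcases eq_or_ne c 0 with rfl | hc0
    · exact theta_base a b d hdet hd0 τ
    obtain ⟨c₁, hc₁⟩ := hc4
    -- d is odd
    have hd2 : d % 2 = 1 := by
      rcases Int.even_or_odd d with ⟨t, ht⟩ | hodd
      · exfalso
        have h2 : (1:ℤ) = 2*(a*t) - 4*(b*c₁) := by rw [← hdet, ht, hc₁]; ring
        set x := a*t; set y := b*c₁
        omega
      · obtain ⟨t, ht⟩ := hodd
        omega
    have hkk : (c.natAbs:ℤ) ≤ (k:ℤ) + 1 := by exact_mod_cast hk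
    have hcnpos : (0:ℤ) < (c.natAbs:ℤ) := by omega
    have hcn4 : (4:ℤ) ∣ (c.natAbs:ℤ) := by omega
    obtain ⟨u, hu⟩ := hcn4
    -- choose d₁
    obtain ⟨d₁, hdvd₁, hd₁odd, hd₁bnd1, hd₁bnd2, hd₁ne⟩ : ∃ d₁ : ℤ, ((c.natAbs:ℤ) ∣ d - d₁) ∧
        d₁ % 2 = 1 ∧ -(c.natAbs:ℤ) < 2*d₁ ∧ 2*d₁ < (c.natAbs:ℤ) ∧ d₁ ≠ 0 := by
      have hsplit := Int.emod_add_mul_ediv d (c.natAbs:ℤ)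
      have hr0 : 0 ≤ d % (c.natAbs:ℤ) := Int.emod_nonneg d (by omega)
      have hrlt : d % (c.natAbs:ℤ) < (c.natAbs:ℤ) := Int.emod_lt_of_pos d hcnpos
      set r := d % (c.natAbs:ℤ) with hr_def
      set q := d / (c.natAbs:ℤ) with hq_def
      clear_value r q
      have hY : (c.natAbs:ℤ) * q = 4*(u*q) := by rw [hu]; ring
      set z := u*q with hz_def
      clear_value z
      rcases lt_or_ge (2*r) (c.natAbs:ℤ) with hcase | hcase
      · exact ⟨r, ⟨q, by omega⟩, by omega, by omega, by omega, by omega⟩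
      · exact ⟨r - (c.natAbs:ℤ), ⟨q+1, by
          have : (c.natAbs:ℤ)*(q+1) = (c.natAbs:ℤ)*q + (c.natAbs:ℤ) := by ring
          omega⟩, by omega, by omega, by omega, by omega⟩
    have hcdvd₁ : c ∣ d - d₁ := (Int.natAbs_dvd).1 hdvd₁
    obtain ⟨n, hn⟩ := hcdvd₁
    -- τ₁ setup
    have hτ₁ : 0 < (τ + (n:ℂ)).im := by
      rw [Complex.add_im, Complex.intCast_im, add_zero]; exact hτ
    have hnC : (c:ℂ)*(n:ℂ) = (d:ℂ) - (d₁:ℂ) := by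
      have : c*n = d - d₁ := by omega
      exact_mod_cast this
    rcases lt_or_gt_of_ne hd₁ne with hd₁neg | hd₁pos
    · -- d₁ < 0 : use (-c, -d₁)
      have hDpos : 0 < -d₁ := by omega
      obtain ⟨C₂, m, hm, hC₂bnd1, hC₂bnd2⟩ := reduce_step (-c) (-d₁) hDpos
      have hC₂4 : (4:ℤ) ∣ C₂ := ⟨-c₁ - (-d₁)*m, by linear_combination -hm - hc₁⟩
      have hC₂le : C₂.natAbs ≤ k := by omega
      have hdet₂ : (-a - 4*m*(n*a - b)) * (-d₁) - (n*a - b) * C₂ = 1 := by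
        linear_combination hdet - a*hn + (n*a - b)*hm
      have hP2 : ∀ σ : ℂ, 0 < σ.im →
          stdTheta ((((-a - 4*m*(n*a - b) : ℤ):ℂ)*σ+((n*a - b : ℤ):ℂ))/((C₂:ℂ)*σ+((-d₁ : ℤ):ℂ))) =
          epsFac C₂ (-d₁) * ((C₂:ℂ)*σ+((-d₁ : ℤ):ℂ)) ^ ((1:ℂ)/2) * stdTheta σ :=
        fun σ hσ => ih C₂ hC₂le _ _ (-d₁) hdet₂ hC₂4 hDpos σ hσ
      have hch := chainV (-a - 4*m*(n*a - b)) (n*a - b) C₂ (-d₁) m hDpos hP2 (τ + (n:ℂ)) hτ₁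
      have hAe : (-a - 4*m*(n*a - b)) + 4*m*(n*a - b) = -a := by ring
      have hCe : C₂ + 4*m*(-d₁) = -c := by linear_combination -hm
      rw [hAe, hCe] at hch
      have hnum : ((-a : ℤ):ℂ)*(τ + (n:ℂ))+((n*a - b : ℤ):ℂ) = -((a:ℂ)*τ+(b:ℂ)) := by
        push_cast
        ring
      have hden : ((-c : ℤ):ℂ)*(τ + (n:ℂ))+((-d₁ : ℤ):ℂ) = -((c:ℂ)*τ+(d:ℂ)) := by
        push_cast
        linear_combination -hnC
      rw [hnum, hden, neg_div_neg_eq, stdTheta_add_int τ n] at hch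
      rw [hch]
      rcases hc0.lt_or_gt with hcneg | hcpos
      · have him : ((c:ℂ)*τ+(d:ℂ)).im < 0 := by
          rw [imLin]
          have : (c:ℝ) < 0 := by exact_mod_cast hcneg
          exact mul_neg_of_neg_of_pos this hτ
        rw [sqrtNegIm him]
        have heps := epsC (⟨c₁, hc₁⟩ : (4:ℤ) ∣ c) hc0 hd0 hDpos hd2 ⟨n, by omega⟩
        rw [if_neg (by omega : ¬ 0 < c)] at heps
        rw [← heps]
        ring
      · have him : 0 < ((c:ℂ)*τ+(d:ℂ)).im := by
          rw [imLin]
          have : (0:ℝ) < (c:ℝ) := by exact_mod_cast hcpos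
          positivity
        rw [sqrtNegPos him]
        have heps := epsC (⟨c₁, hc₁⟩ : (4:ℤ) ∣ c) hc0 hd0 hDpos hd2 ⟨n, by omega⟩
        rw [if_pos hcpos] at heps
        rw [← heps]
        ring
    · -- d₁ > 0 : use (c, d₁)
      obtain ⟨C₂, m, hm, hC₂bnd1, hC₂bnd2⟩ := reduce_step c d₁ hd₁pos
      have hC₂4 : (4:ℤ) ∣ C₂ := ⟨c₁ - d₁*m, by linear_combination -hm + hc₁⟩
      have hC₂le : C₂.natAbs ≤ k := by omega
      have hdet₂ : (a - 4*m*(b - n*a)) * d₁ - (b - n*a) * C₂ = 1 := by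
        linear_combination hdet - a*hn + (b - n*a)*hm
      have hP2 : ∀ σ : ℂ, 0 < σ.im →
          stdTheta ((((a - 4*m*(b - n*a) : ℤ):ℂ)*σ+((b - n*a : ℤ):ℂ))/((C₂:ℂ)*σ+((d₁ : ℤ):ℂ))) =
          epsFac C₂ d₁ * ((C₂:ℂ)*σ+((d₁ : ℤ):ℂ)) ^ ((1:ℂ)/2) * stdTheta σ :=
        fun σ hσ => ih C₂ hC₂le _ _ d₁ hdet₂ hC₂4 hd₁pos σ hσ
      have hch := chainV (a - 4*m*(b - n*a)) (b - n*a) C₂ d₁ m hd₁pos hP2 (τ + (n:ℂ)) hτ₁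
      have hAe : (a - 4*m*(b - n*a)) + 4*m*(b - n*a) = a := by ring
      have hCe : C₂ + 4*m*d₁ = c := by linear_combination -hm
      rw [hAe, hCe] at hch
      have hnum : ((a : ℤ):ℂ)*(τ + (n:ℂ))+((b - n*a : ℤ):ℂ) = (a:ℂ)*τ+(b:ℂ) := by
        push_cast
        ring
      have hden : ((c : ℤ):ℂ)*(τ + (n:ℂ))+((d₁ : ℤ):ℂ) = (c:ℂ)*τ+(d:ℂ) := by
        push_cast
        linear_combination hnC
      rw [hnum, hden, stdTheta_add_int τ n] at hch
      rw [hch]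
      have heps : epsFac c d = epsFac c d₁ :=
        epsA (⟨c₁, hc₁⟩ : (4:ℤ) ∣ c) hd0 hd₁pos hd2 ⟨n, hn⟩
      rw [heps]

end StdThetaAux

open StdThetaAux in
/-- For `((a,b),(c,d)) ∈ SL₂(ℤ)` with `4 ∣ c` and `d > 0`, and `τ ∈ ℍ`,
`θ((aτ+b)/(cτ+d)) = ε √(cτ+d) θ(τ)`, where `ε = (c/d)` if `d ≡ 1 (mod 4)` and
`ε = -i (c/d)` if `d ≡ 3 (mod 4)`, `(c/d)` being the Jacobi symbol and `√` the
principal branch of the square root. -/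
theorem stdTheta_transform (M : SL(2, ℤ)) (hc : (4 : ℤ) ∣ M 1 0) (hd : 0 < M 1 1)
    (τ : UpperHalfPlane) :
    stdTheta ((((M 0 0 : ℤ) : ℂ) * (τ : ℂ) + ((M 0 1 : ℤ) : ℂ)) /
        (((M 1 0 : ℤ) : ℂ) * (τ : ℂ) + ((M 1 1 : ℤ) : ℂ))) =
      (if (M 1 1 : ℤ) % 4 = 1 then ((jacobiSym (M 1 0) (M 1 1).natAbs : ℤ) : ℂ)
        else -Complex.I * ((jacobiSym (M 1 0) (M 1 1).natAbs : ℤ) : ℂ)) *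
      (((M 1 0 : ℤ) : ℂ) * (τ : ℂ) + ((M 1 1 : ℤ) : ℂ)) ^ ((1 : ℂ) / 2) *
      stdTheta (τ : ℂ) := by
  have hdet : M 0 0 * M 1 1 - M 0 1 * M 1 0 = 1 := by
    have := M.property
    rw [Matrix.det_fin_two] at this
    linarith
  have him : 0 < (τ : ℂ).im := τ.2
  have key := thetaMain (M 1 0).natAbs (M 1 0) le_rfl (M 0 0) (M 0 1) (M 1 1) hdet hc hd
    (τ : ℂ) him
  have heps : epsFac (M 1 0) (M 1 1) =
      (if (M 1 1 : ℤ) % 4 = 1 then ((jacobiSym (M 1 0) (M 1 1).natAbs : ℤ) : ℂ)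
        else -Complex.I * ((jacobiSym (M 1 0) (M 1 1).natAbs : ℤ) : ℂ)) := by
    rw [epsFac]
    by_cases h : (M 1 1 : ℤ) % 4 = 1
    · rw [if_pos h, if_pos h, one_mul]
    · rw [if_neg h, if_neg h]
  rw [key, heps]
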